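/- Given a partial action ({X_t}, {h_t}) of a group G on a set X, setting D_t = F₀(X_t) (functions supported in X_t) and α_t : D_{t⁻¹} → D_t, α_t(f) = f ∘ h_{t⁻¹}, yields a partial action ({D_t}, {α_t}) of G on the K-algebra F₀(X) by ideals and algebra isomorphisms. -/

import Mathlib

/-- A partial action of a group `G` on a (possibly non-unital) `K`-algebra `A`:
two-sided ideals `D t` (with `D e = A`) together with `K`-algebra isomorphisms
`α t : D t⁻¹ → D t` (modelled as total functions constrained on `D t⁻¹`)
satisfying the partial action axioms. -/
structure AlgPartialAction (G : Type*) [Group G] (K : Type*) [Field K]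
    (A : Type*) [NonUnitalRing A] [Module K A] where
  /-- the ideals `D_t` -/
  D : G → Set A
  /-- the isomorphisms `α_t : D_{t⁻¹} → D_t`, as total functions -/
  α : G → A → A
  D_add : ∀ t, ∀ a ∈ D t, ∀ b ∈ D t, a + b ∈ D t
  D_zero : ∀ t, (0 : A) ∈ D t
  D_smul : ∀ t (k : K), ∀ a ∈ D t, k • a ∈ D t
  D_mul_right : ∀ t, ∀ a ∈ D t, ∀ b : A, a * b ∈ D t
  D_mul_left : ∀ t, ∀ a ∈ D t, ∀ b : A, b * a ∈ D t
  D_one : D 1 = Set.univ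
  α_one : ∀ a, α 1 a = a
  α_maps : ∀ t, ∀ a ∈ D t⁻¹, α t a ∈ D t
  α_add : ∀ t, ∀ a ∈ D t⁻¹, ∀ b ∈ D t⁻¹, α t (a + b) = α t a + α t b
  α_smul : ∀ t (k : K), ∀ a ∈ D t⁻¹, α t (k • a) = k • α t a
  α_mul : ∀ t, ∀ a ∈ D t⁻¹, ∀ b ∈ D t⁻¹, α t (a * b) = α t a * α t b
  α_inv : ∀ t, ∀ a ∈ D t⁻¹, α t⁻¹ (α t a) = a
  α_image : ∀ t s, α t '' (D t⁻¹ ∩ D s) = D t ∩ D (t * s)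
  α_comp : ∀ t s, ∀ a ∈ D s⁻¹, a ∈ D (s⁻¹ * t⁻¹) → α t (α s a) = α (t * s) a

/-- A partial action `θ = ({X_t}, {h_t})` of a group `G` on a set `X`.
Each `h t` is modelled as a total function `X → X` whose behaviour is only
constrained on the domain `Xt t⁻¹`; the axioms say that `h t` restricts to a
bijection from `Xt t⁻¹` onto `Xt t` (with inverse `h t⁻¹`) and that the usual
partial action axioms hold. -/
structure PartialAction (G X : Type*) [Group G] where
  /-- the domains `X_t` -/
  Xt : G → Set X
  /-- the partial bijections `h_t`, as total functions -/
  h : G → X → X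
  Xt_one : Xt 1 = Set.univ
  h_one : ∀ x, h 1 x = x
  maps_to : ∀ t x, x ∈ Xt t⁻¹ → h t x ∈ Xt t
  h_inv : ∀ t x, x ∈ Xt t⁻¹ → h t⁻¹ (h t x) = x
  image_eq : ∀ t s, h t '' (Xt t⁻¹ ∩ Xt s) = Xt t ∩ Xt (t * s)
  h_comp : ∀ t s x, x ∈ Xt s⁻¹ → x ∈ Xt (s⁻¹ * t⁻¹) → h t (h s x) = h (t * s) x

variable {G X : Type*} [Group G]

/-- A partial action is free if `h t x = x` for some `x ∈ X_{t⁻¹}` implies `t = e`. -/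
def PartialAction.Free (pa : PartialAction G X) : Prop :=
  ∀ t x, x ∈ pa.Xt t⁻¹ → pa.h t x = x → t = 1

/-- The equivalence relation `R` associated to a partial action. -/
def PartialAction.Rel (pa : PartialAction G X) : Set (X × X) :=
  {p | ∃ t, p.1 ∈ pa.Xt t⁻¹ ∧ pa.h t p.1 = p.2}

namespace S7

variable {K : Type*} [Field K] {G X : Type*} [Group G] (pa : PartialAction G X)

def Dset (t : G) : Set (X →₀ K) := {f | ∀ x ∉ pa.Xt t, f x = 0}

noncomputable def amap (t : G) (f : X →₀ K) : X →₀ K := Finsupp.mapDomain (pa.h t) f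

lemma h_injOn (t : G) : Set.InjOn (pa.h t) (pa.Xt t⁻¹) := fun a ha b hb hab => by
  rw [← pa.h_inv t a ha, hab, pa.h_inv t b hb]

lemma hinv_mem (t : G) {x : X} (hx : x ∈ pa.Xt t) : pa.h t⁻¹ x ∈ pa.Xt t⁻¹ := by
  apply pa.maps_to t⁻¹ x; rwa [inv_inv]

lemma h_hinv (t : G) {x : X} (hx : x ∈ pa.Xt t) : pa.h t (pa.h t⁻¹ x) = x := by
  have := pa.h_inv t⁻¹ x (by rwa [inv_inv])
  rwa [inv_inv] at this

variable {pa}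

lemma support_sub {t : G} {f : X →₀ K} (hf : f ∈ Dset pa t) :
    (f.support : Set X) ⊆ pa.Xt t := fun x hx => by
  by_contra h
  exact Finsupp.mem_support_iff.mp hx (hf x h)

lemma amap_apply_mem {t : G} {f : X →₀ K} (hf : f ∈ Dset pa t⁻¹) {x : X}
    (hx : x ∈ pa.Xt t) : amap pa t f x = f (pa.h t⁻¹ x) := by
  have h1 : pa.h t⁻¹ x ∈ pa.Xt t⁻¹ := hinv_mem pa t hx
  have := Finsupp.mapDomain_apply' (pa.Xt t⁻¹) f (support_sub hf) (h_injOn pa t) h1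
  rwa [h_hinv pa t hx] at this

lemma amap_apply_not_mem {t : G} {f : X →₀ K} (hf : f ∈ Dset pa t⁻¹) {x : X}
    (hx : x ∉ pa.Xt t) : amap pa t f x = 0 := by
  rw [amap, Finsupp.mapDomain, Finsupp.sum_apply, Finsupp.sum]
  refine Finset.sum_eq_zero fun a ha => ?_
  refine Finsupp.single_eq_of_ne' fun hax => hx ?_
  rw [← hax]
  exact pa.maps_to t a (support_sub hf ha)

lemma amap_maps {t : G} {f : X →₀ K} (hf : f ∈ Dset pa t⁻¹) :
    amap pa t f ∈ Dset pa t := fun x hx => amap_apply_not_mem hf hx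

lemma amap_inv {t : G} {f : X →₀ K} (hf : f ∈ Dset pa t⁻¹) :
    amap pa t⁻¹ (amap pa t f) = f := by
  have hg : amap pa t f ∈ Dset pa (t⁻¹)⁻¹ := by rw [inv_inv]; exact amap_maps hf
  ext x
  by_cases hx : x ∈ pa.Xt t⁻¹
  · rw [amap_apply_mem hg hx, inv_inv, amap_apply_mem hf (pa.maps_to t x hx),
      pa.h_inv t x hx]
  · rw [amap_apply_not_mem hg hx, hf x hx]

lemma amap_image_sub (t s : G) {f : X →₀ K} (hf : f ∈ Dset pa t⁻¹ ∩ Dset pa s) :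
    amap pa t f ∈ Dset pa t ∩ Dset pa (t * s) := by
  refine ⟨amap_maps hf.1, fun x hx => ?_⟩
  by_cases hxt : x ∈ pa.Xt t
  · rw [amap_apply_mem hf.1 hxt]
    apply hf.2
    intro hmem
    have : x ∈ pa.Xt t ∩ pa.Xt (t * s) := by
      rw [← pa.image_eq t s]
      exact ⟨pa.h t⁻¹ x, ⟨hinv_mem pa t hxt, hmem⟩, h_hinv pa t hxt⟩
    exact hx this.2
  · exact amap_apply_not_mem hf.1 hxt

lemma amap_image (t s : G) :
    amap pa t '' (Dset pa t⁻¹ ∩ Dset pa s : Set (X →₀ K)) = Dset pa t ∩ Dset pa (t * s) := by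
  apply Set.Subset.antisymm
  · rintro _ ⟨f, hf, rfl⟩
    exact amap_image_sub t s hf
  · rintro g ⟨hg1, hg2⟩
    have hg1' : g ∈ Dset pa (t⁻¹)⁻¹ := by rwa [inv_inv]
    refine ⟨amap pa t⁻¹ g, ⟨amap_maps hg1', fun x hx => ?_⟩, ?_⟩
    · by_cases hxt : x ∈ pa.Xt t⁻¹
      · rw [amap_apply_mem hg1' hxt, inv_inv]
        apply hg2
        intro hmem
        have h2 : pa.h t x ∈ pa.Xt t ∩ pa.Xt (t * s) := ⟨pa.maps_to t x hxt, hmem⟩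
        rw [← pa.image_eq t s] at h2
        obtain ⟨y, ⟨hy1, hy2⟩, hy3⟩ := h2
        have := h_injOn pa t hy1 hxt hy3
        rw [this] at hy2
        exact hx hy2
      · exact amap_apply_not_mem hg1' hxt
    · have := amap_inv hg1'
      rwa [inv_inv] at this

lemma amap_comp (t s : G) {a : X →₀ K} (ha1 : a ∈ Dset pa s⁻¹)
    (ha2 : a ∈ Dset pa (s⁻¹ * t⁻¹)) : amap pa t (amap pa s a) = amap pa (t * s) a := by
  have hmem : amap pa s a ∈ Dset pa s ∩ Dset pa (s * (s⁻¹ * t⁻¹)) :=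
    amap_image_sub s (s⁻¹ * t⁻¹) ⟨ha1, ha2⟩
  have hmem' : amap pa s a ∈ Dset pa t⁻¹ := by
    have := hmem.2; rwa [mul_inv_cancel_left] at this
  have hts : a ∈ Dset pa (t * s)⁻¹ := by rwa [mul_inv_rev]
  ext x
  by_cases hx1 : x ∈ pa.Xt t
  · rw [amap_apply_mem hmem' hx1]
    by_cases hx2 : x ∈ pa.Xt (t * s)
    · -- h t⁻¹ x ∈ Xt s
      have hxi : pa.h t⁻¹ x ∈ pa.Xt s := by
        have h2 : x ∈ pa.Xt t ∩ pa.Xt (t * s) := ⟨hx1, hx2⟩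
        rw [← pa.image_eq t s] at h2
        obtain ⟨y, ⟨hy1, hy2⟩, hy3⟩ := h2
        have hxx : pa.h t⁻¹ x = y := by rw [← hy3, pa.h_inv t y hy1]
        rwa [hxx]
      rw [amap_apply_mem ha1 hxi, amap_apply_mem hts hx2, mul_inv_rev,
        pa.h_comp s⁻¹ t⁻¹ x (by rwa [inv_inv]) (by rwa [inv_inv, inv_inv])]
    · -- RHS = 0 and LHS = 0
      rw [amap_apply_not_mem hts hx2]
      by_cases hxi : pa.h t⁻¹ x ∈ pa.Xt s
      · exfalso
        apply hx2
        have : x ∈ pa.Xt t ∩ pa.Xt (t * s) := by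
          rw [← pa.image_eq t s]
          exact ⟨pa.h t⁻¹ x, ⟨hinv_mem pa t hx1, hxi⟩, h_hinv pa t hx1⟩
        exact this.2
      · exact amap_maps ha1 _ hxi
  · rw [amap_apply_not_mem hmem' hx1]
    by_cases hx2 : x ∈ pa.Xt (t * s)
    · rw [amap_apply_mem hts hx2]
      set y := pa.h (t * s)⁻¹ x with hy
      apply (ha1 y _).symm
      intro hys
      apply hx1
      have hyts : y ∈ pa.Xt (t * s)⁻¹ := hinv_mem pa (t * s) hx2
      have hyts' : y ∈ pa.Xt (s⁻¹ * t⁻¹) := by rwa [mul_inv_rev] at hyts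
      have hcomp := pa.h_comp t s y hys hyts'
      have : pa.h (t * s) y = x := h_hinv pa (t * s) hx2
      rw [this] at hcomp
      rw [← hcomp]
      apply pa.maps_to t
      have hsy : pa.h s y ∈ pa.Xt s ∩ pa.Xt (s * (s⁻¹ * t⁻¹)) := by
        rw [← pa.image_eq s (s⁻¹ * t⁻¹)]
        exact ⟨y, ⟨hys, hyts'⟩, rfl⟩
      have := hsy.2; rwa [mul_inv_cancel_left] at this
    · rw [amap_apply_not_mem hts hx2]

end S7


/-- A partial action `({X_t}, {h_t})` of `G` on the set `X` induces a
partial action of `G` on the `K`-algebra `F₀(X) = X →₀ K` by the ideals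
`D t = F₀(X_t) = {f : f = 0 off X_t}` and the isomorphisms `α t f = f ∘ h t⁻¹`
(i.e. `(α t f) x = f (h t⁻¹ x)` for `x ∈ X_t`, and `(α t f) x = 0` for `x ∉ X_t`). -/
theorem statement7 (K : Type*) [Field K] {G X : Type*} [Group G]
    (pa : PartialAction G X) :
    ∃ ap : AlgPartialAction G K (X →₀ K),
      (∀ t, ap.D t = {f : X →₀ K | ∀ x ∉ pa.Xt t, f x = 0}) ∧
      (∀ t, ∀ f ∈ ap.D t⁻¹,
        (∀ x ∈ pa.Xt t, ap.α t f x = f (pa.h t⁻¹ x)) ∧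
        (∀ x ∉ pa.Xt t, ap.α t f x = 0)) := by
  classical
  refine ⟨{ D := S7.Dset pa, α := S7.amap pa
            D_add := fun t a ha b hb x hx => by
              rw [Finsupp.add_apply, ha x hx, hb x hx, add_zero]
            D_zero := fun t x _ => rfl
            D_smul := fun t k a ha x hx => by rw [Finsupp.smul_apply, ha x hx, smul_zero]
            D_mul_right := fun t a ha b x hx => by rw [Finsupp.mul_apply, ha x hx, zero_mul]
            D_mul_left := fun t a ha b x hx => by rw [Finsupp.mul_apply, ha x hx, mul_zero]
            D_one := Set.eq_univ_iff_forall.mpr fun f x hx =>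
              absurd (by rw [pa.Xt_one]; trivial) hx
            α_one := fun f => by
              rw [S7.amap, show pa.h 1 = id from funext pa.h_one, Finsupp.mapDomain_id]
            α_maps := fun t a ha => S7.amap_maps ha
            α_add := fun t a _ b _ => Finsupp.mapDomain_add
            α_smul := fun t k a _ => Finsupp.mapDomain_smul k a
            α_mul := fun t a ha b hb => by
              have hab : a * b ∈ S7.Dset pa t⁻¹ := fun x hx => by
                rw [Finsupp.mul_apply, ha x hx, zero_mul]
              ext x
              by_cases hx : x ∈ pa.Xt t
              · rw [S7.amap_apply_mem hab hx, Finsupp.mul_apply, Finsupp.mul_apply,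
                  S7.amap_apply_mem ha hx, S7.amap_apply_mem hb hx]
              · rw [S7.amap_apply_not_mem hab hx, Finsupp.mul_apply,
                  S7.amap_apply_not_mem ha hx, zero_mul]
            α_inv := fun t a ha => S7.amap_inv ha
            α_image := fun t s => S7.amap_image t s
            α_comp := fun t s a ha1 ha2 => S7.amap_comp t s ha1 ha2 }, fun t => rfl,
      fun t f hf => ⟨fun x hx => S7.amap_apply_mem hf hx,
        fun x hx => S7.amap_apply_not_mem hf hx⟩⟩
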